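/- The subgroup Γ₁ of SL₂(ℤ) generated by the matrices [[1,2],[0,1]] and [[1,0],[2,1]] has index exactly 12 in SL₂(ℤ). -/

import Mathlib

open Matrix

namespace G1I

abbrev SL2Z := Matrix.SpecialLinearGroup (Fin 2) ℤ
abbrev SL2M := Matrix.SpecialLinearGroup (Fin 2) (ZMod 4)

def T2 : SL2Z := ⟨!![1, 2; 0, 1], by simp [Matrix.det_fin_two_of]⟩
def L2 : SL2Z := ⟨!![1, 0; 2, 1], by simp [Matrix.det_fin_two_of]⟩

def Γ : Subgroup SL2Z := Subgroup.closure {T2, L2}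

lemma T2_mem : T2 ∈ Γ := Subgroup.subset_closure (Set.mem_insert _ _)
lemma L2_mem : L2 ∈ Γ := Subgroup.subset_closure (Set.mem_insert_of_mem _ rfl)

def eA : SL2M := ⟨!![1, 2; 0, 1], by decide⟩
def eB : SL2M := ⟨!![1, 0; 2, 1], by decide⟩
def eC : SL2M := ⟨!![1, 2; 2, 1], by decide⟩

instance : DecidableEq SL2M := fun a b =>
  decidable_of_iff (a.1 = b.1) Subtype.ext_iff.symm

def K : Subgroup SL2M where
  carrier := {1, eA, eB, eC}
  one_mem' := Or.inl rfl
  mul_mem' := by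
    rintro a b (rfl|rfl|rfl|rfl) (rfl|rfl|rfl|rfl) <;>
      simp only [Set.mem_insert_iff, Set.mem_singleton_iff] <;> decide
  inv_mem' := by
    rintro a (rfl|rfl|rfl|rfl) <;>
      simp only [Set.mem_insert_iff, Set.mem_singleton_iff] <;> decide

instance : DecidablePred (· ∈ K) := fun y =>
  decidable_of_iff (y = 1 ∨ y = eA ∨ y = eB ∨ y = eC) Iff.rfl

lemma eA_mem : eA ∈ K := Or.inr (Or.inl rfl)
lemma eB_mem : eB ∈ K := Or.inr (Or.inr (Or.inl rfl))

def f : SL2Z →* SL2M := Matrix.SpecialLinearGroup.map (Int.castRingHom (ZMod 4))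

lemma fT2 : f T2 = eA := by decide
lemma fL2 : f L2 = eB := by decide

lemma dvd_helper {a v : ℤ} (h : ((a : ZMod 4)) = ((v : ZMod 4))) : (4:ℤ) ∣ v - a :=
  ((ZMod.intCast_eq_intCast_iff _ _ _).mp h).dvd

lemma entries_of_mem {g : SL2Z} (hg : f g ∈ K) :
    (4:ℤ) ∣ g 0 0 - 1 ∧ (2:ℤ) ∣ g 0 1 ∧ (2:ℤ) ∣ g 1 0 := by
  have hg' : f g = 1 ∨ f g = eA ∨ f g = eB ∨ f g = eC := hg
  rcases hg' with h | h | h | h <;>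
  · have e00 : ((g 0 0 : ℤ) : ZMod 4) = ((1 : ℤ) : ZMod 4) := by
      rw [show ((g 0 0 : ℤ) : ZMod 4) = (f g).1 0 0 from rfl, h]; decide
    have h00 := dvd_helper e00
    first
    | (have e01 : ((g 0 1 : ℤ) : ZMod 4) = ((0 : ℤ) : ZMod 4) := by
        rw [show ((g 0 1 : ℤ) : ZMod 4) = (f g).1 0 1 from rfl, h]; decide
       have h01 := dvd_helper e01
       first
       | (have e10 : ((g 1 0 : ℤ) : ZMod 4) = ((0 : ℤ) : ZMod 4) := by
           rw [show ((g 1 0 : ℤ) : ZMod 4) = (f g).1 1 0 from rfl, h]; decide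
          have h10 := dvd_helper e10
          exact ⟨by omega, by omega, by omega⟩)
       | (have e10 : ((g 1 0 : ℤ) : ZMod 4) = ((2 : ℤ) : ZMod 4) := by
           rw [show ((g 1 0 : ℤ) : ZMod 4) = (f g).1 1 0 from rfl, h]; decide
          have h10 := dvd_helper e10
          exact ⟨by omega, by omega, by omega⟩))
    | (have e01 : ((g 0 1 : ℤ) : ZMod 4) = ((2 : ℤ) : ZMod 4) := by
        rw [show ((g 0 1 : ℤ) : ZMod 4) = (f g).1 0 1 from rfl, h]; decide
       have h01 := dvd_helper e01
       first
       | (have e10 : ((g 1 0 : ℤ) : ZMod 4) = ((0 : ℤ) : ZMod 4) := by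
           rw [show ((g 1 0 : ℤ) : ZMod 4) = (f g).1 1 0 from rfl, h]; decide
          have h10 := dvd_helper e10
          exact ⟨by omega, by omega, by omega⟩)
       | (have e10 : ((g 1 0 : ℤ) : ZMod 4) = ((2 : ℤ) : ZMod 4) := by
           rw [show ((g 1 0 : ℤ) : ZMod 4) = (f g).1 1 0 from rfl, h]; decide
          have h10 := dvd_helper e10
          exact ⟨by omega, by omega, by omega⟩))

lemma exists_shift_pos (x c : ℤ) (hc : 0 < c) :
    ∃ j : ℤ, -c ≤ x + 2 * c * j ∧ x + 2 * c * j < c := by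
  have h2c : (0:ℤ) < 2 * c := by omega
  set q := (x + c) / (2 * c) with hq
  set r := (x + c) % (2 * c) with hr
  have h1 : 0 ≤ r := Int.emod_nonneg _ (by omega)
  have h2 : r < 2 * c := Int.emod_lt_of_pos _ h2c
  have h3 : 2 * c * q + r = x + c := Int.mul_ediv_add_emod _ _
  have e : x + 2 * c * (-q) = r - c := by linear_combination -h3
  exact ⟨-q, by rw [e]; omega, by rw [e]; omega⟩

lemma exists_shift (x c : ℤ) (hc : c ≠ 0) :
    ∃ j : ℤ, -(c.natAbs : ℤ) ≤ x + 2 * c * j ∧ x + 2 * c * j < (c.natAbs : ℤ) := by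
  rcases hc.lt_or_gt with h | h
  · obtain ⟨j, h1, h2⟩ := exists_shift_pos x (-c) (by omega)
    have e : x + 2 * c * (-j) = x + 2 * (-c) * j := by ring
    exact ⟨-j, by rw [e]; omega, by rw [e]; omega⟩
  · obtain ⟨j, h1, h2⟩ := exists_shift_pos x c h
    exact ⟨j, by omega, by omega⟩

lemma Tpow (m : ℤ) : ((T2 ^ m : SL2Z) : Matrix (Fin 2) (Fin 2) ℤ) = !![1, 2*m; 0, 1] := by
  induction m using Int.induction_on with
  | zero => decide
  | succ n ih =>
      rw [_root_.zpow_add_one, Matrix.SpecialLinearGroup.coe_mul, ih]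
      show _ * (!![1, 2; 0, 1] : Matrix (Fin 2) (Fin 2) ℤ) = _
      rw [Matrix.mul_fin_two]
      ext i j
      fin_cases i <;> fin_cases j <;> simp <;> ring
  | pred n ih =>
      rw [_root_.zpow_sub_one, Matrix.SpecialLinearGroup.coe_mul, ih]
      have hinv : (T2⁻¹ : SL2Z) = ⟨!![1, -2; 0, 1], by simp [Matrix.det_fin_two_of]⟩ := by
        apply inv_eq_of_mul_eq_one_right
        apply Subtype.ext
        show (!![1, 2; 0, 1] * !![1, -2; 0, 1] : Matrix (Fin 2) (Fin 2) ℤ) = _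
        norm_num [Matrix.mul_fin_two, Matrix.one_fin_two]; decide
      rw [hinv]
      show _ * (!![1, -2; 0, 1] : Matrix (Fin 2) (Fin 2) ℤ) = _
      rw [Matrix.mul_fin_two]
      ext i j
      fin_cases i <;> fin_cases j <;> simp <;> ring

lemma Lpow (m : ℤ) : ((L2 ^ m : SL2Z) : Matrix (Fin 2) (Fin 2) ℤ) = !![1, 0; 2*m, 1] := by
  induction m using Int.induction_on with
  | zero => decide
  | succ n ih =>
      rw [_root_.zpow_add_one, Matrix.SpecialLinearGroup.coe_mul, ih]
      show _ * (!![1, 0; 2, 1] : Matrix (Fin 2) (Fin 2) ℤ) = _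
      rw [Matrix.mul_fin_two]
      ext i j
      fin_cases i <;> fin_cases j <;> simp <;> ring
  | pred n ih =>
      rw [_root_.zpow_sub_one, Matrix.SpecialLinearGroup.coe_mul, ih]
      have hinv : (L2⁻¹ : SL2Z) = ⟨!![1, 0; -2, 1], by simp [Matrix.det_fin_two_of]⟩ := by
        apply inv_eq_of_mul_eq_one_right
        apply Subtype.ext
        show (!![1, 0; 2, 1] * !![1, 0; -2, 1] : Matrix (Fin 2) (Fin 2) ℤ) = _
        norm_num [Matrix.mul_fin_two, Matrix.one_fin_two]; decide
      rw [hinv]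
      show _ * (!![1, 0; -2, 1] : Matrix (Fin 2) (Fin 2) ℤ) = _
      rw [Matrix.mul_fin_two]
      ext i j
      fin_cases i <;> fin_cases j <;> simp <;> ring

lemma base {g : SL2Z} (hc : g 1 0 = 0) (hg : f g ∈ K) : g ∈ Γ := by
  obtain ⟨ha, hb, -⟩ := entries_of_mem hg
  have hdet : g 0 0 * g 1 1 - g 0 1 * g 1 0 = 1 := by
    have h2 := g.2
    rw [Matrix.det_fin_two] at h2
    exact h2
  have h1 : g 0 0 * g 1 1 = 1 := by rw [hc] at hdet; linarith
  have ha1 : g 0 0 = 1 := by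
    rcases Int.isUnit_iff.mp (IsUnit.of_mul_eq_one _ h1) with h | h
    · exact h
    · omega
  have hd1 : g 1 1 = 1 := by rw [ha1] at h1; linarith
  obtain ⟨m, hm⟩ := hb
  have hgeq : g = T2 ^ m := by
    apply Subtype.ext
    rw [Tpow, Matrix.eta_fin_two (g : Matrix (Fin 2) (Fin 2) ℤ)]
    rw [show (g : Matrix (Fin 2) (Fin 2) ℤ) 0 0 = g 0 0 from rfl,
        show (g : Matrix (Fin 2) (Fin 2) ℤ) 0 1 = g 0 1 from rfl,
        show (g : Matrix (Fin 2) (Fin 2) ℤ) 1 0 = g 1 0 from rfl,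
        show (g : Matrix (Fin 2) (Fin 2) ℤ) 1 1 = g 1 1 from rfl,
        ha1, hd1, hc, hm]
  rw [hgeq]
  exact Subgroup.zpow_mem _ T2_mem m

lemma main (n : ℕ) : ∀ g : SL2Z, (g 1 0).natAbs ≤ n → f g ∈ K → g ∈ Γ := by
  induction n with
  | zero =>
      intro g hn hg
      exact base (by omega) hg
  | succ n ih =>
      intro g hn hg
      by_cases hc0 : g 1 0 = 0
      · exact base hc0 hg
      · obtain ⟨ha4, hb2, hc2⟩ := entries_of_mem hg
        obtain ⟨j, hj1, hj2⟩ := exists_shift (g 0 0) (g 1 0) hc0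
        obtain ⟨a', ha'e, hj1, hj2⟩ :
            ∃ a', a' = g 0 0 + 2 * g 1 0 * j ∧
              -(((g 1 0).natAbs : ℤ)) ≤ a' ∧ a' < ((g 1 0).natAbs : ℤ) :=
          ⟨_, rfl, hj1, hj2⟩
        have ha'par : (2:ℤ) ∣ a' - g 0 0 := ⟨g 1 0 * j, by rw [ha'e]; ring⟩
        have ha'0 : a' ≠ 0 := by omega
        obtain ⟨k, hk1, hk2⟩ := exists_shift (g 1 0) a' ha'0
        obtain ⟨c', hc'e, hk1, hk2⟩ :
            ∃ c', c' = g 1 0 + 2 * a' * k ∧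
              -((a'.natAbs : ℤ)) ≤ c' ∧ c' < (a'.natAbs : ℤ) :=
          ⟨_, rfl, hk1, hk2⟩
        have hc'par : (2:ℤ) ∣ c' - g 1 0 := ⟨a' * k, by rw [hc'e]; ring⟩
        have hlt : c'.natAbs < (g 1 0).natAbs := by omega
        set h := L2 ^ k * (T2 ^ j * g) with hh
        have hfh : f h ∈ K := by
          rw [hh, _root_.map_mul, _root_.map_mul, _root_.map_zpow, _root_.map_zpow, fT2, fL2]
          exact K.mul_mem (K.zpow_mem eB_mem k) (K.mul_mem (K.zpow_mem eA_mem j) hg)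
        have hentry : h 1 0 = c' := by
          show (↑h : Matrix (Fin 2) (Fin 2) ℤ) 1 0 = c'
          rw [hh, Matrix.SpecialLinearGroup.coe_mul, Matrix.SpecialLinearGroup.coe_mul,
            Tpow, Lpow, Matrix.eta_fin_two (g : Matrix (Fin 2) (Fin 2) ℤ),
            Matrix.mul_fin_two, Matrix.mul_fin_two]
          show 2 * k * _ + 1 * _ = c'
          rw [hc'e, ha'e]
          ring
        have hmem : h ∈ Γ := by
          apply ih h _ hfh
          rw [hentry]
          omega
        have hgeq : g = (T2 ^ j)⁻¹ * ((L2 ^ k)⁻¹ * h) := by rw [hh]; group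
        rw [hgeq]
        exact Γ.mul_mem (Γ.inv_mem (Subgroup.zpow_mem _ T2_mem j))
          (Γ.mul_mem (Γ.inv_mem (Subgroup.zpow_mem _ L2_mem k)) hmem)


-- integer coset representatives
def RZ : Fin 12 → SL2Z
  | 0 => ⟨!![-1, -1; 0, -1], by simp [Matrix.det_fin_two_of]⟩
  | 1 => ⟨!![-1, -1; 1, 0], by simp [Matrix.det_fin_two_of]⟩
  | 2 => ⟨!![-1, 0; -1, -1], by simp [Matrix.det_fin_two_of]⟩
  | 3 => ⟨!![-1, 0; 0, -1], by simp [Matrix.det_fin_two_of]⟩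
  | 4 => ⟨!![-1, 1; -1, 0], by simp [Matrix.det_fin_two_of]⟩
  | 5 => ⟨!![0, -1; 1, -1], by simp [Matrix.det_fin_two_of]⟩
  | 6 => ⟨!![0, -1; 1, 0], by simp [Matrix.det_fin_two_of]⟩
  | 7 => ⟨!![0, 1; -1, -1], by simp [Matrix.det_fin_two_of]⟩
  | 8 => ⟨!![0, 1; -1, 0], by simp [Matrix.det_fin_two_of]⟩
  | 9 => ⟨!![1, -1; 0, 1], by simp [Matrix.det_fin_two_of]⟩
  | 10 => ⟨!![1, 0; -1, 1], by simp [Matrix.det_fin_two_of]⟩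
  | 11 => 1

def RM : Fin 12 → SL2M
  | 0 => ⟨!![3, 3; 0, 3], by decide⟩
  | 1 => ⟨!![3, 3; 1, 0], by decide⟩
  | 2 => ⟨!![3, 0; 3, 3], by decide⟩
  | 3 => ⟨!![3, 0; 0, 3], by decide⟩
  | 4 => ⟨!![3, 1; 3, 0], by decide⟩
  | 5 => ⟨!![0, 3; 1, 3], by decide⟩
  | 6 => ⟨!![0, 3; 1, 0], by decide⟩
  | 7 => ⟨!![0, 1; 3, 3], by decide⟩
  | 8 => ⟨!![0, 1; 3, 0], by decide⟩
  | 9 => ⟨!![1, 3; 0, 1], by decide⟩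
  | 10 => ⟨!![1, 0; 3, 1], by decide⟩
  | 11 => 1

lemma fRZ (i : Fin 12) : f (RZ i) = RM i := by fin_cases i <;> decide

lemma covering : ∀ x : SL2M, ∃ i : Fin 12, (RM i)⁻¹ * x ∈ K := by decide

lemma K_sub_range : ∀ y ∈ K, y ∈ f.range := by
  rintro y (rfl|rfl|rfl|rfl)
  · exact ⟨1, map_one f⟩
  · exact ⟨T2, fT2⟩
  · exact ⟨L2, fL2⟩
  · exact ⟨T2 * L2, by rw [_root_.map_mul, fT2, fL2]; apply Subtype.ext; decide⟩

lemma f_surj : Function.Surjective f := by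
  intro x
  obtain ⟨i, hi⟩ := covering x
  obtain ⟨g, hg⟩ := K_sub_range _ hi
  exact ⟨RZ i * g, by rw [_root_.map_mul, fRZ, hg]; group⟩


lemma index_K : K.index = 12 := by
  have h48 : Nat.card SL2M = 48 := by rw [Nat.card_eq_fintype_card]; decide
  have h4 : Nat.card K = 4 := by rw [Nat.card_eq_fintype_card]; decide
  have hm := K.card_mul_index
  rw [h4, h48] at hm
  omega

lemma gamma_eq : Γ = K.comap f := by
  apply le_antisymm
  · rw [Γ, Subgroup.closure_le]
    rintro x (rfl | rfl)
    · show f T2 ∈ K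
      rw [fT2]; exact eA_mem
    · show f L2 ∈ K
      rw [fL2]; exact eB_mem
  · intro g hg
    exact main (g 1 0).natAbs g le_rfl hg

end G1I

/-- The subgroup `Γ₁` of `SL₂(ℤ)` generated by `[[1,2],[0,1]]` and
`[[1,0],[2,1]]` has index exactly `12` in `SL₂(ℤ)`. -/
theorem Gamma_one_index_eq_twelve :
    (Subgroup.closure
        {g : Matrix.SpecialLinearGroup (Fin 2) ℤ |
          (g : Matrix (Fin 2) (Fin 2) ℤ) = !![1, 2; 0, 1] ∨
          (g : Matrix (Fin 2) (Fin 2) ℤ) = !![1, 0; 2, 1]}).index = 12 := by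
  have hset : {g : Matrix.SpecialLinearGroup (Fin 2) ℤ |
      (g : Matrix (Fin 2) (Fin 2) ℤ) = !![1, 2; 0, 1] ∨
      (g : Matrix (Fin 2) (Fin 2) ℤ) = !![1, 0; 2, 1]} = ({G1I.T2, G1I.L2} : Set _) := by
    ext g
    constructor
    · rintro (h | h)
      · exact Or.inl (Subtype.ext h)
      · exact Or.inr (Subtype.ext h)
    · rintro (rfl | rfl)
      · exact Or.inl rfl
      · exact Or.inr rfl
  rw [hset]
  show G1I.Γ.index = 12
  rw [G1I.gamma_eq, Subgroup.index_comap_of_surjective _ G1I.f_surj]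
  exact G1I.index_K
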